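/- arXiv:2010.03198 — 2 statements merged into one kernel-verified Lean document; each statement's English description precedes it below -/
import Mathlib

section
/- Let a ∈ (ℤ/2)^d nonzero and n_1,…,n_d ≥ 3 with h = gcd(n_1,…,n_d). Let B = (A_{K_{n_1}}^{a_1} ⊗ ⋯ ⊗ A_{K_{n_d}}^{a_d}) ⊗ I_{2^r}. Then exp(-i(2π/h)B) = exp((-1)^{w(a)-1}(2π/h)i) · I_{2^r n_1⋯n_d}. -/
open Kronecker

/-- Adjacency matrix of the complete graph `K_n`, as a complex matrix. -/
noncomputable def Kadj (n : ℕ) : Matrix (Fin n) (Fin n) ℂ :=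
  Matrix.of fun i j => if i = j then 0 else 1

/-- Adjacency matrix of `K_2`, indexed by `ZMod 2`. -/
noncomputable def A2 : Matrix (ZMod 2) (ZMod 2) ℂ :=
  Matrix.of fun i j => if i = j then 0 else 1

/-- Kronecker product of a family of matrices. -/
noncomputable def kronC {d : ℕ} {n : Fin d → ℕ}
    (M : ∀ i, Matrix (Fin (n i)) (Fin (n i)) ℂ) :
    Matrix (∀ i, Fin (n i)) (∀ i, Fin (n i)) ℂ :=
  Matrix.of fun u v => ∏ i, M i (u i) (v i)

/-- `M_a = A_{K_2}^{a_1} ⊗ ⋯ ⊗ A_{K_2}^{a_r}` for `a ∈ (ℤ/2)^r`. -/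
noncomputable def cube {r : ℕ} (a : Fin r → ZMod 2) :
    Matrix (Fin r → ZMod 2) (Fin r → ZMod 2) ℂ :=
  Matrix.of fun u v => ∏ j, (if a j = 1 then A2 else 1) (u j) (v j)

/-- `A_{K_{n_1}}^{a_1} ⊗ ⋯ ⊗ A_{K_{n_d}}^{a_d}`. -/
noncomputable def compKron {d : ℕ} (n : Fin d → ℕ) (a : Fin d → ZMod 2) :
    Matrix (∀ i, Fin (n i)) (∀ i, Fin (n i)) ℂ :=
  kronC fun i => if a i = 1 then Kadj (n i) else 1

/-- Hamming weight. -/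
def wt {m : ℕ} (a : Fin m → ZMod 2) : ℕ :=
  (Finset.univ.filter fun i => a i = 1).card

set_option maxHeartbeats 1000000 in
/-- Exponential of a scalar multiple of an idempotent in a complex Banach algebra. -/
theorem exp_smul_idem' {A : Type*} [NormedRing A] [NormedAlgebra ℂ A] [CompleteSpace A]
    (P : A) (hP : P * P = P) (w : ℂ) :
    NormedSpace.exp (w • P) = 1 + (Complex.exp w - 1) • P := by
  have hpow : ∀ k : ℕ, (w • P) ^ (k + 1) = w ^ (k + 1) • P := by
    intro k
    induction k with
    | zero => simp
    | succ k ih =>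
        rw [pow_succ, ih, smul_mul_assoc, mul_smul_comm, smul_smul, hP, ← pow_succ]
  have hsum : Summable fun k : ℕ => (k.factorial : ℂ)⁻¹ * w ^ k := by
    simpa [smul_eq_mul] using NormedSpace.expSeries_summable' (𝕂 := ℂ) w
  have hsum1 : Summable fun k : ℕ => ((k+1).factorial : ℂ)⁻¹ * w ^ (k+1) :=
    (summable_nat_add_iff 1).2 hsum
  simp only [NormedSpace.exp_eq_tsum (𝕂 := ℂ)]
  rw [Summable.tsum_eq_zero_add (NormedSpace.expSeries_summable' (𝕂 := ℂ) (w • P))]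
  simp only [pow_zero, Nat.factorial_zero, Nat.cast_one, inv_one, one_smul, hpow, smul_smul]
  rw [Summable.tsum_smul_const ?_]
  congr 1
  have he : Complex.exp w = ∑' n : ℕ, ((n.factorial : ℂ))⁻¹ * w ^ n := by
    rw [Complex.exp_eq_exp_ℂ, NormedSpace.exp_eq_tsum (𝕂 := ℂ)]
    simp [smul_eq_mul]
  rw [Summable.tsum_eq_zero_add hsum] at he
  simp only [pow_zero, Nat.factorial_zero, Nat.cast_one, inv_one, mul_one] at he
  have hh : Complex.exp w - 1 = ∑' (z : ℕ), ((z + 1).factorial : ℂ)⁻¹ * w ^ (z + 1) := by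
    rw [he]; ring
  rw [hh]
  exact hsum1

/-- Matrix version of `exp_smul_idem'`. -/
theorem Matrix.exp_smul_idem {m : Type*} [Fintype m] [DecidableEq m]
    (P : Matrix m m ℂ) (hP : P * P = P) (w : ℂ) :
    NormedSpace.exp (w • P) = 1 + (Complex.exp w - 1) • P := by
  letI : SeminormedRing (Matrix m m ℂ) := Matrix.linftyOpSemiNormedRing
  letI : NormedRing (Matrix m m ℂ) := Matrix.linftyOpNormedRing
  letI : NormedAlgebra ℂ (Matrix m m ℂ) := Matrix.linftyOpNormedAlgebra
  exact exp_smul_idem' P hP w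

theorem exp_sum_one {m ι : Type*} [Fintype m] [DecidableEq m] (s : Finset ι)
    (f : ι → Matrix m m ℂ)
    (hc : (s : Set ι).Pairwise (Function.onFun Commute f))
    (h1 : ∀ i ∈ s, NormedSpace.exp (f i) = 1) :
    NormedSpace.exp (∑ i ∈ s, f i) = 1 := by
  rw [Matrix.exp_sum_of_commute s f hc]
  exact (Finset.noncommProd_eq_pow_card s _ _ 1 fun i hi => h1 i hi).trans (one_pow _)

noncomputable def JS {d : ℕ} (n : Fin d → ℕ) (S : Finset (Fin d)) :
    Matrix (∀ i, Fin (n i)) (∀ i, Fin (n i)) ℂ :=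
  Matrix.of fun u v => ∏ i, if i ∈ S then 1 else (if u i = v i then 1 else 0)

theorem JS_empty {d : ℕ} (n : Fin d → ℕ) : JS n ∅ = 1 := by
  ext u v
  simp only [JS, Matrix.of_apply, Finset.notMem_empty, if_false, Finset.prod_boole,
    Matrix.one_apply]
  congr 1
  simp [funext_iff, eq_comm]

theorem JS_mul {d : ℕ} (n : Fin d → ℕ) (S T : Finset (Fin d)) :
    JS n S * JS n T = (∏ i ∈ S ∩ T, (n i : ℂ)) • JS n (S ∪ T) := by
  ext u v
  simp only [Matrix.mul_apply, JS, Matrix.of_apply, Matrix.smul_apply, smul_eq_mul]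
  have lhs :
      (∑ w : ∀ i, Fin (n i), (∏ i, if i ∈ S then (1:ℂ) else if u i = w i then 1 else 0) *
        ∏ i, if i ∈ T then (1:ℂ) else if w i = v i then 1 else 0)
      = ∏ i, ∑ x : Fin (n i),
          (if i ∈ S then (1:ℂ) else if u i = x then 1 else 0) *
          (if i ∈ T then (1:ℂ) else if x = v i then 1 else 0) := by
    rw [Fintype.prod_sum]
    exact Finset.sum_congr rfl fun w _ => (Finset.prod_mul_distrib).symm
  rw [lhs]
  have rhs :
      (∏ i ∈ S ∩ T, (n i : ℂ)) * (∏ i, if i ∈ S ∪ T then (1:ℂ) else if u i = v i then 1 else 0)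
      = ∏ i, ((if i ∈ S ∩ T then (n i : ℂ) else 1) *
          (if i ∈ S ∪ T then (1:ℂ) else if u i = v i then 1 else 0)) := by
    rw [Finset.prod_mul_distrib]
    congr 1
    rw [Finset.prod_ite_mem Finset.univ (S ∩ T) (fun i => (n i : ℂ)), Finset.univ_inter]
  rw [rhs]
  refine Finset.prod_congr rfl fun i _ => ?_
  by_cases hS : i ∈ S <;> by_cases hT : i ∈ T <;>
    simp [hS, hT, Finset.mem_inter, Finset.mem_union, Finset.sum_ite_eq, Finset.sum_ite_eq',
      Finset.card_univ, mul_comm]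

theorem compKron_eq {d : ℕ} (n : Fin d → ℕ) (a : Fin d → ZMod 2) :
    compKron n a = ∑ S ∈ (Finset.univ.filter fun i => a i = 1).powerset,
      ((-1 : ℂ) ^ (wt a - S.card)) • JS n S := by
  classical
  set supp := (Finset.univ.filter fun i => a i = 1) with hsupp
  ext u v
  simp only [compKron, kronC, Matrix.of_apply, Matrix.sum_apply, Matrix.smul_apply, JS,
    smul_eq_mul]
  have hsplit : (∏ i, (if a i = 1 then Kadj (n i) else 1) (u i) (v i))
      = (∏ i ∈ supp, (if u i = v i then (0:ℂ) else 1)) *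
        ∏ i ∈ suppᶜ, (if u i = v i then (1:ℂ) else 0) := by
    rw [← Finset.prod_mul_prod_compl supp]
    congr 1
    · refine Finset.prod_congr rfl fun i hi => ?_
      rw [hsupp] at hi
      simp only [Finset.mem_filter] at hi
      simp [hi.2, Kadj]
    · refine Finset.prod_congr rfl fun i hi => ?_
      rw [hsupp] at hi
      simp only [Finset.mem_compl, Finset.mem_filter, Finset.mem_univ, true_and] at hi
      simp [hi, Matrix.one_apply]
  rw [hsplit]
  have hexp : (∏ i ∈ supp, (if u i = v i then (0:ℂ) else 1))
      = ∑ S ∈ supp.powerset, (-1 : ℂ) ^ (supp \ S).card *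
          ∏ i ∈ supp \ S, (if u i = v i then (1:ℂ) else 0) := by
    have : ∀ i ∈ supp, (if u i = v i then (0:ℂ) else 1)
        = 1 + (-(if u i = v i then (1:ℂ) else 0)) := by
      intro i _; by_cases h : u i = v i <;> simp [h]
    rw [Finset.prod_congr rfl this, Finset.prod_add]
    refine Finset.sum_congr rfl fun S hS => ?_
    rw [Finset.prod_const_one, one_mul]
    have : ∀ i ∈ supp \ S, (-(if u i = v i then (1:ℂ) else 0))
        = (-1) * (if u i = v i then (1:ℂ) else 0) := by intro i _; ring
    rw [Finset.prod_congr rfl this, Finset.prod_mul_distrib, Finset.prod_const]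
  rw [hexp, Finset.sum_mul]
  refine Finset.sum_congr rfl fun S hS => ?_
  rw [Finset.mem_powerset] at hS
  have hcard : (supp \ S).card = wt a - S.card := by
    rw [Finset.card_sdiff_of_subset hS]; rfl
  rw [hcard, mul_assoc]
  congr 1
  rw [← Finset.prod_union (Finset.disjoint_left.2 fun i hi hi' =>
    (Finset.mem_compl.1 hi') (Finset.mem_sdiff.1 hi).1)]
  have hset : (supp \ S) ∪ suppᶜ = Sᶜ := by
    ext i
    simp only [Finset.mem_union, Finset.mem_sdiff, Finset.mem_compl]
    constructor
    · rintro (⟨-, h⟩ | h)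
      · exact h
      · exact fun hiS => h (hS hiS)
    · intro h
      by_cases hi : i ∈ supp
      · exact Or.inl ⟨hi, h⟩
      · exact Or.inr hi
  rw [hset,
    ← Finset.prod_mul_prod_compl S fun i => if i ∈ S then (1:ℂ) else if u i = v i then 1 else 0]
  have h1 : (∏ i ∈ S, if i ∈ S then (1:ℂ) else if u i = v i then 1 else 0) = 1 :=
    Finset.prod_congr rfl (fun i hi => by simp [hi]) |>.trans (Finset.prod_const_one)
  rw [h1, one_mul]
  exact (Finset.prod_congr rfl fun i hi => by simp [Finset.mem_compl.1 hi]).symm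

noncomputable def KS {d : ℕ} (n : Fin d → ℕ) (r : ℕ) (S : Finset (Fin d)) :
    Matrix ((∀ i, Fin (n i)) × (Fin r → ZMod 2)) ((∀ i, Fin (n i)) × (Fin r → ZMod 2)) ℂ :=
  JS n S ⊗ₖ (1 : Matrix (Fin r → ZMod 2) (Fin r → ZMod 2) ℂ)

theorem KS_mul {d : ℕ} (n : Fin d → ℕ) (r : ℕ) (S T : Finset (Fin d)) :
    KS n r S * KS n r T = (∏ i ∈ S ∩ T, (n i : ℂ)) • KS n r (S ∪ T) := by
  rw [KS, KS, KS, ← Matrix.mul_kronecker_mul, JS_mul, one_mul, Matrix.smul_kronecker]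

theorem KS_empty {d : ℕ} (n : Fin d → ℕ) (r : ℕ) : KS n r ∅ = 1 := by
  rw [KS, JS_empty, Matrix.one_kronecker_one]

theorem B_eq {d : ℕ} (n : Fin d → ℕ) (r : ℕ) (a : Fin d → ZMod 2) :
    (compKron n a) ⊗ₖ (1 : Matrix (Fin r → ZMod 2) (Fin r → ZMod 2) ℂ)
      = ∑ S ∈ (Finset.univ.filter fun i => a i = 1).powerset,
        ((-1 : ℂ) ^ (wt a - S.card)) • KS n r S := by
  rw [compKron_eq]
  ext p q
  simp [KS, Matrix.sum_apply, Matrix.smul_apply, Matrix.kroneckerMap_apply, Finset.sum_mul,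
    mul_assoc]

/-- for nonzero `a ∈ (ℤ/2)^d`, `n_i ≥ 3` and `h = gcd(n_1,…,n_d)`,
`exp(-i(2π/h)(M_a ⊗ I_{2^r})) = exp((-1)^{w(a)-1}(2π/h)i)·I`. -/
theorem stmt12 (d r : ℕ) (hd : 0 < d) (n : Fin d → ℕ) (hn : ∀ i, 3 ≤ n i)
    (a : Fin d → ZMod 2) (ha : a ≠ 0) :
    NormedSpace.exp
        ((-Complex.I * ((2 * Real.pi / ((Finset.univ.gcd n : ℕ) : ℝ) : ℝ) : ℂ)) •
          ((compKron n a) ⊗ₖ (1 : Matrix (Fin r → ZMod 2) (Fin r → ZMod 2) ℂ))) =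
      Complex.exp ((-1 : ℂ) ^ (wt a - 1) *
          ((2 * Real.pi / ((Finset.univ.gcd n : ℕ) : ℝ) : ℝ) : ℂ) * Complex.I) •
        (1 : Matrix ((∀ i, Fin (n i)) × (Fin r → ZMod 2))
          ((∀ i, Fin (n i)) × (Fin r → ZMod 2)) ℂ) := by
  classical
  set h : ℕ := Finset.univ.gcd n with hh
  set c : ℂ := -Complex.I * ((2 * Real.pi / (h : ℝ) : ℝ) : ℂ) with hc
  set supp := (Finset.univ.filter fun i => a i = 1) with hsupp
  -- basic facts
  have hw1 : 1 ≤ wt a := by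
    obtain ⟨i, hi⟩ : ∃ i, a i ≠ 0 := by
      by_contra hcon; push_neg at hcon; exact ha (funext hcon)
    have hi1 : a i = 1 := by
      have : ∀ x : ZMod 2, x ≠ 0 → x = 1 := by decide
      exact this _ hi
    have : 0 < (Finset.univ.filter fun j => a j = 1).card :=
      Finset.card_pos.2 ⟨i, Finset.mem_filter.2 ⟨Finset.mem_univ i, hi1⟩⟩
    exact this
  have hh0 : h ≠ 0 := by
    intro h0
    have hdvd : h ∣ n ⟨0, hd⟩ := Finset.gcd_dvd (Finset.mem_univ _)
    rw [h0] at hdvd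
    have := Nat.eq_zero_of_zero_dvd hdvd
    have := hn ⟨0, hd⟩
    omega
  have hhR : ((h : ℝ)) ≠ 0 := Nat.cast_ne_zero.2 hh0
  -- commuting family
  have hKcomm : ∀ S T : Finset (Fin d), Commute (KS n r S) (KS n r T) := by
    intro S T
    unfold Commute SemiconjBy
    rw [KS_mul, KS_mul, Finset.inter_comm, Finset.union_comm]
  -- rewrite in terms of KS
  rw [B_eq n r a, Finset.smul_sum]
  simp only [smul_smul, ← hsupp]
  set f : Finset (Fin d) → Matrix ((∀ i, Fin (n i)) × (Fin r → ZMod 2))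
      ((∀ i, Fin (n i)) × (Fin r → ZMod 2)) ℂ :=
    fun S => (c * (-1 : ℂ) ^ (wt a - S.card)) • KS n r S with hf
  have hfcomm : ∀ S T : Finset (Fin d), Commute (f S) (f T) := fun S T =>
    (((hKcomm S T).smul_left _).smul_right _)
  have hempty : (∅ : Finset (Fin d)) ∈ supp.powerset := Finset.empty_mem_powerset _
  rw [← Finset.add_sum_erase _ f hempty]
  have hcomm0 : Commute (f ∅) (∑ S ∈ supp.powerset.erase ∅, f S) :=
    Commute.sum_right _ f (f ∅) fun S _ => hfcomm ∅ S
  rw [Matrix.exp_add_of_commute _ _ hcomm0]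
  -- the sum over nonempty subsets exponentiates to 1
  have hexp1 : NormedSpace.exp (∑ S ∈ supp.powerset.erase ∅, f S) = 1 := by
    refine exp_sum_one _ f (fun S _ T _ _ => hfcomm S T) ?_
    intro S hS
    obtain ⟨hSne, hSp⟩ := Finset.mem_erase.1 hS
    rw [Finset.mem_powerset] at hSp
    obtain ⟨i₀, hi₀⟩ := Finset.nonempty_of_ne_empty hSne
    set N : ℕ := ∏ i ∈ S, n i with hN
    have hN0 : (N : ℂ) ≠ 0 := by
      have : 0 < N := Finset.prod_pos fun i _ => by have := hn i; omega
      exact_mod_cast this.ne'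
    have hdvd : h ∣ N := (Finset.gcd_dvd (Finset.mem_univ i₀)).trans
      (Finset.dvd_prod_of_mem n hi₀)
    obtain ⟨k, hk⟩ := hdvd
    set P : Matrix ((∀ i, Fin (n i)) × (Fin r → ZMod 2))
        ((∀ i, Fin (n i)) × (Fin r → ZMod 2)) ℂ := ((N : ℂ))⁻¹ • KS n r S with hP
    have hPidem : P * P = P := by
      rw [hP, smul_mul_assoc, mul_smul_comm, KS_mul, Finset.inter_self, Finset.union_self,
        smul_smul, smul_smul]
      have : (∏ i ∈ S, (n i : ℂ)) = (N : ℂ) := by rw [hN]; push_cast; ring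
      rw [this]
      congr 1
      field_simp
    have hfS : f S = ((c * (-1 : ℂ) ^ (wt a - S.card)) * N) • P := by
      rw [hf, hP, smul_smul]
      field_simp
    rw [hfS, Matrix.exp_smul_idem P hPidem]
    have hone : Complex.exp ((c * (-1 : ℂ) ^ (wt a - S.card)) * N) = 1 := by
      rw [Complex.exp_eq_one_iff]
      refine ⟨-((-1 : ℤ) ^ (wt a - S.card)) * k, ?_⟩
      have hcast : ((-1 : ℂ)) ^ (wt a - S.card) = (((-1 : ℤ) ^ (wt a - S.card) : ℤ) : ℂ) := by
        push_cast; ring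
      have hhC : ((h : ℂ)) ≠ 0 := Nat.cast_ne_zero.2 hh0
      rw [hc, hcast, hk]
      push_cast
      field_simp
    rw [hone]
    simp
  rw [hexp1, mul_one]
  -- the empty set term
  have hf0 : f ∅ = (c * (-1 : ℂ) ^ (wt a)) • (1 : Matrix ((∀ i, Fin (n i)) × (Fin r → ZMod 2))
      ((∀ i, Fin (n i)) × (Fin r → ZMod 2)) ℂ) := by
    simp only [hf, KS_empty, Finset.card_empty, Nat.sub_zero]
  rw [hf0, Matrix.exp_smul_idem 1 (by rw [one_mul])]
  have hz : c * (-1 : ℂ) ^ (wt a) = (-1 : ℂ) ^ (wt a - 1) *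
      ((2 * Real.pi / (h : ℝ) : ℝ) : ℂ) * Complex.I := by
    have hpow : ((-1 : ℂ)) ^ (wt a - 1) = -(-1 : ℂ) ^ (wt a) := by
      have : wt a - 1 + 1 = wt a := Nat.succ_pred_eq_of_pos hw1
      calc ((-1 : ℂ)) ^ (wt a - 1) = -((-1 : ℂ) ^ (wt a - 1) * (-1)) := by ring
        _ = -(-1 : ℂ) ^ (wt a) := by rw [← pow_succ, this]
    rw [hpow, hc]
    ring
  rw [hz, sub_smul, one_smul]
  abel
end

section
/- Let 𝒜' ⊆ (ℤ/2)^r \ {0} be nonempty, N ≥ 1, and B = Σ_{a∈𝒜'} I_N ⊗ M_a with M_a = A_{K_2}^{a_1} ⊗ ⋯ ⊗ A_{K_2}^{a_r}. Set c = Σ_{a∈𝒜'} a in (ℤ/2)^r. Then exp(-i(π/2)B) = (-i)^{|𝒜'|} · (I_N ⊗ M_c). In particular, if c ≠ 0 the graph admits perfect state transfer from every vertex (x,u) to (x, u+c) at time π/2, and if c = 0 the graph is periodic with period π/2. -/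
open Kronecker

open NormedSpace in
lemma exp_smul_of_sq_eq_one {𝔸 : Type*} [NormedRing 𝔸] [NormedAlgebra ℂ 𝔸] [CompleteSpace 𝔸]
    (X : 𝔸) (h : X * X = 1) (z : ℂ) :
    exp (z • X) = Complex.cosh z • (1 : 𝔸) + Complex.sinh z • X := by
  have hX2 : X ^ 2 = 1 := by rw [sq, h]
  have heven : ∀ k : ℕ, X ^ (2 * k) = 1 := fun k => by rw [pow_mul, hX2, one_pow]
  have hodd : ∀ k : ℕ, X ^ (2 * k + 1) = X := fun k => by rw [pow_succ, heven, one_mul]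
  rw [exp_eq_tsum (𝕂 := ℂ)]
  refine (HasSum.even_add_odd ?_ ?_).tsum_eq
  · have := (Complex.hasSum_cosh z).smul_const (1 : 𝔸)
    convert this using 2 with k
    rw [smul_pow, heven k, smul_smul, div_eq_mul_inv, mul_comm]
  · have := (Complex.hasSum_sinh z).smul_const X
    convert this using 2 with k
    rw [smul_pow, hodd k, smul_smul, div_eq_mul_inv, mul_comm]

open NormedSpace in
lemma matrix_exp_invol {m : Type*} [Fintype m] [DecidableEq m]
    (X : Matrix m m ℂ) (h : X * X = 1) :
    exp ((-Complex.I * ((Real.pi / 2 : ℝ) : ℂ)) • X) = (-Complex.I) • X := by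
  letI : SeminormedRing (Matrix m m ℂ) := Matrix.linftyOpSemiNormedRing
  letI : NormedRing (Matrix m m ℂ) := Matrix.linftyOpNormedRing
  letI : NormedAlgebra ℂ (Matrix m m ℂ) := Matrix.linftyOpNormedAlgebra
  refine (exp_smul_of_sq_eq_one X h _).trans ?_
  have h1 : (-Complex.I * ((Real.pi / 2 : ℝ) : ℂ)) = -(((Real.pi/2 : ℝ) : ℂ) * Complex.I) := by
    ring
  rw [h1, Complex.cosh_neg, Complex.sinh_neg, Complex.cosh_mul_I, Complex.sinh_mul_I,
    ← Complex.ofReal_cos, ← Complex.ofReal_sin, Real.cos_pi_div_two, Real.sin_pi_div_two]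
  simp

lemma cube_apply {r : ℕ} (a u v : Fin r → ZMod 2) :
    cube a u v = if v = u + a then 1 else 0 := by
  have key : ∀ j, (if a j = 1 then A2 else 1) (u j) (v j)
      = if v j = u j + a j then (1 : ℂ) else 0 := by
    intro j
    rcases (by decide : ∀ x : ZMod 2, x = 0 ∨ x = 1) (a j) with h | h <;> rw [h]
    · simp [Matrix.one_apply, eq_comm]
    · rw [if_pos rfl]
      show (if u j = v j then (0:ℂ) else 1) = _
      rcases eq_or_ne (u j) (v j) with h2 | h2
      · rw [if_pos h2, if_neg]
        rw [← h2]
        exact fun hc => by simp at hc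
      · rw [if_neg h2, if_pos]
        revert h2
        have : ∀ x y : ZMod 2, x ≠ y → y = x + 1 := by decide
        exact this _ _
  show (∏ j, (if a j = 1 then A2 else 1) (u j) (v j)) = _
  simp_rw [key]
  rw [Finset.prod_boole]
  congr 1
  simp [funext_iff, eq_iff_iff]

lemma cube_mul {r : ℕ} (a b : Fin r → ZMod 2) : cube a * cube b = cube (a + b) := by
  ext u v
  rw [Matrix.mul_apply]
  simp only [cube_apply]
  rw [Finset.sum_eq_single (u + a)]
  · simp [add_assoc]
  · intro w _ hw; simp [hw]
  · intro h; exact absurd (Finset.mem_univ _) h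

lemma cube_zero {r : ℕ} : cube (0 : Fin r → ZMod 2) = 1 := by
  ext u v
  rw [cube_apply]
  simp [Matrix.one_apply, eq_comm]

section K
variable (N r : ℕ)

noncomputable def Kmat (a : Fin r → ZMod 2) : Matrix (Fin N × (Fin r → ZMod 2)) (Fin N × (Fin r → ZMod 2)) ℂ :=
  (1 : Matrix (Fin N) (Fin N) ℂ) ⊗ₖ cube a

lemma Kmat_mul (a b : Fin r → ZMod 2) : Kmat N r a * Kmat N r b = Kmat N r (a + b) := by
  unfold Kmat
  rw [← Matrix.mul_kronecker_mul, one_mul, cube_mul]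

lemma Kmat_zero : Kmat N r 0 = 1 := by
  unfold Kmat
  rw [cube_zero, Matrix.one_kronecker_one]

lemma Kmat_sq (a : Fin r → ZMod 2) : Kmat N r a * Kmat N r a = 1 := by
  rw [Kmat_mul]
  have : a + a = 0 := by
    funext j
    have : ∀ x : ZMod 2, x + x = 0 := by decide
    exact this _
  rw [this, Kmat_zero]

lemma Kmat_comm (a b : Fin r → ZMod 2) : Commute (Kmat N r a) (Kmat N r b) := by
  show _ = _
  rw [Kmat_mul, Kmat_mul, add_comm]

open NormedSpace in
lemma exp_sum_Kmat (𝒜 : Finset (Fin r → ZMod 2)) :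
    exp ((-Complex.I * ((Real.pi / 2 : ℝ) : ℂ)) • ∑ a ∈ 𝒜, Kmat N r a)
      = (-Complex.I) ^ 𝒜.card • Kmat N r (∑ a ∈ 𝒜, a) := by
  classical
  induction 𝒜 using Finset.induction_on with
  | empty => simp [Kmat_zero, exp_zero]
  | @insert a s ha ih =>
    rw [Finset.sum_insert ha, smul_add, Matrix.exp_add_of_commute, ih,
      matrix_exp_invol _ (Kmat_sq N r a), Finset.sum_insert ha, Finset.card_insert_of_notMem ha,
      smul_mul_smul_comm, Kmat_mul, pow_succ]
    · ring_nf
    · exact ((Commute.sum_right s _ _ (fun b _ => Kmat_comm N r a b)).smul_left _).smul_right _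
end K

/-- for nonempty `𝒜' ⊆ (ℤ/2)^r \ {0}`, `B = Σ_{a∈𝒜'} I_N ⊗ M_a` and
`c = Σ_{a∈𝒜'} a`, one has `exp(-i(π/2)B) = (-i)^{|𝒜'|}·(I_N ⊗ M_c)`; in particular
PST from `(x,u)` to `(x,u+c)` at time `π/2` if `c ≠ 0`, and periodicity with period
`π/2` if `c = 0`. -/
theorem stmt16 (N r : ℕ) (hN : 1 ≤ N) (𝒜 : Finset (Fin r → ZMod 2))
    (h1 : 𝒜.Nonempty) (h0 : 0 ∉ 𝒜) :
    NormedSpace.exp ((-Complex.I * ((Real.pi / 2 : ℝ) : ℂ)) •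
        ∑ a ∈ 𝒜, (1 : Matrix (Fin N) (Fin N) ℂ) ⊗ₖ cube a) =
      (-Complex.I) ^ 𝒜.card • ((1 : Matrix (Fin N) (Fin N) ℂ) ⊗ₖ cube (∑ a ∈ 𝒜, a)) ∧
    ((∑ a ∈ 𝒜, a) ≠ 0 → ∀ (x : Fin N) (u : Fin r → ZMod 2),
      (x, u) ≠ (x, u + ∑ a ∈ 𝒜, a) ∧
      ‖(NormedSpace.exp ((-Complex.I * ((Real.pi / 2 : ℝ) : ℂ)) •
        ∑ a ∈ 𝒜, (1 : Matrix (Fin N) (Fin N) ℂ) ⊗ₖ cube a))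
          (x, u) (x, u + ∑ a ∈ 𝒜, a)‖ = 1) ∧
    ((∑ a ∈ 𝒜, a) = 0 → ∀ p : Fin N × (Fin r → ZMod 2),
      ‖(NormedSpace.exp ((-Complex.I * ((Real.pi / 2 : ℝ) : ℂ)) •
        ∑ a ∈ 𝒜, (1 : Matrix (Fin N) (Fin N) ℂ) ⊗ₖ cube a)) p p‖ = 1) := by
  have hmain : NormedSpace.exp ((-Complex.I * ((Real.pi / 2 : ℝ) : ℂ)) •
        ∑ a ∈ 𝒜, (1 : Matrix (Fin N) (Fin N) ℂ) ⊗ₖ cube a) =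
      (-Complex.I) ^ 𝒜.card • ((1 : Matrix (Fin N) (Fin N) ℂ) ⊗ₖ cube (∑ a ∈ 𝒜, a)) :=
    exp_sum_Kmat N r 𝒜
  have habs : ‖(-Complex.I) ^ 𝒜.card‖ = 1 := by
    rw [norm_pow]
    simp
  refine ⟨hmain, ?_, ?_⟩
  · intro hc x u
    constructor
    · intro hcontra
      apply hc
      have := (Prod.mk.injEq x u x (u + ∑ a ∈ 𝒜, a)).mp hcontra
      exact (left_eq_add.mp this.2)
    · rw [hmain]
      rw [Matrix.smul_apply, Matrix.kroneckerMap_apply, cube_apply, Matrix.one_apply_eq,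
        if_pos rfl]
      simpa using habs
  · intro hc p
    rw [hmain, hc, cube_zero, Matrix.one_kronecker_one, Matrix.smul_apply, Matrix.one_apply_eq]
    simpa using habs
end
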